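/- arXiv:1403.7982 — 2 statements merged into one kernel-verified Lean document; each statement's English description precedes it below -/
import Mathlib

section
/- Let a, b, t_1, t_2, … be commuting formal variables. Then in the ring of formal power series over ℤ one has the identity Σ_{p,q ≥ 0} Σ_{λ ⊢ p+q} #syd(λ;p,q) · a^p b^q t_λ = ∏_{k=1}^∞ (1 − a^k b^k t_{2k})^{−2} · (1 − a^{k−1} b^k t_{2k−1})^{−1} · (1 − a^k b^{k−1} t_{2k−1})^{−1}, where for λ = [1^{m_1} · 2^{m_2} ⋯] (m_i the multiplicity of i in λ) one sets t_λ = t_1^{m_1} t_2^{m_2} ⋯. Equivalently: for all p, q ≥ 0 and every partition λ of p+q, #syd(λ;p,q) equals the coefficient of the monomial a^p b^q t_λ in the infinite product (which is well defined since only finitely many factors contribute to each monomial). -/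
open Finset

/-- A signed Young diagram of shape `lam` and signature `(p, q)`, encoded by the
function `f` sending each part length `i` to the number of rows of length `i`
whose leading sign is `+`.  A row of length `i` with leading sign `+` has
`(i+1)/2` plus-boxes and `i/2` minus-boxes, and vice versa for leading sign `-`. -/
structure SYD {n : ℕ} (lam : Nat.Partition n) (p q : ℕ) : Type where
  f : ℕ → ℕ
  le_mult : ∀ i, f i ≤ Multiset.count i lam.parts
  plus_eq : ∑ i ∈ lam.parts.toFinset,
      (f i * ((i + 1) / 2) + (Multiset.count i lam.parts - f i) * (i / 2)) = p
  minus_eq : ∑ i ∈ lam.parts.toFinset,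
      (f i * (i / 2) + (Multiset.count i lam.parts - f i) * ((i + 1) / 2)) = q

/-- Index type for the formal variables: `Sum.inr true = a`, `Sum.inr false = b`,
`Sum.inl i = t_i`. -/
abbrev Var : Type := ℕ ⊕ Bool

noncomputable def va : MvPowerSeries Var ℤ := MvPowerSeries.X (Sum.inr true)
noncomputable def vb : MvPowerSeries Var ℤ := MvPowerSeries.X (Sum.inr false)
noncomputable def vt (i : ℕ) : MvPowerSeries Var ℤ := MvPowerSeries.X (Sum.inl i)

/-- `(1 - φ)⁻¹` as a formal power series (the inverse of `1 - φ`, which has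
constant term `1`). -/
noncomputable def geomInv (φ : MvPowerSeries Var ℤ) : MvPowerSeries Var ℤ :=
  MvPowerSeries.invOfUnit (1 - φ) 1

/-- The exponent of the monomial `a^p b^q t_λ`. -/
noncomputable def degOf {n : ℕ} (lam : Nat.Partition n) (p q : ℕ) : Var →₀ ℕ :=
  Finsupp.single (Sum.inr true) p + Finsupp.single (Sum.inr false) q +
    ∑ i ∈ lam.parts.toFinset, Finsupp.single (Sum.inl i) (Multiset.count i lam.parts)

open MvPowerSeries in
lemma geomInv_eq (φ : MvPowerSeries Var ℤ) (h : constantCoeff (σ := Var) (R := ℤ) φ = 0) :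
    geomInv φ = 1 + φ * geomInv φ := by
  have h1 : (constantCoeff (σ := Var) (R := ℤ)) (1 - φ) = (1 : ℤˣ) := by simp [h]
  have key := MvPowerSeries.mul_invOfUnit (1 - φ) 1 h1
  have : (1 - φ) * geomInv φ = 1 := key
  rw [sub_mul, one_mul, sub_eq_iff_eq_add] at this
  exact this

noncomputable local instance : ∀ (p : Prop), Decidable p := Classical.propDecidable

def mydeg (d : Var →₀ ℕ) : ℕ := d.sum fun _ n => n

lemma mydeg_add (a b : Var →₀ ℕ) : mydeg (a + b) = mydeg a + mydeg b :=
  Finsupp.sum_add_index' (fun _ => rfl) (fun _ _ _ => rfl)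

lemma mydeg_pos (d : Var →₀ ℕ) (hd : d ≠ 0) : 0 < mydeg d := by
  obtain ⟨x, hx⟩ := DFunLike.ne_iff.mp hd
  have hxs : x ∈ d.support := Finsupp.mem_support_iff.mpr (by simpa using hx)
  have h2 : d x ≤ mydeg d := Finset.single_le_sum (fun i _ => Nat.zero_le (d i)) hxs
  have h3 : d x ≠ 0 := by simpa using hx
  omega

lemma coeff_geomInv (d : Var →₀ ℕ) (hd : d ≠ 0) (e : Var →₀ ℕ) :
    MvPowerSeries.coeff (R := ℤ) e (geomInv (MvPowerSeries.monomial (R := ℤ) d 1)) =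
      if ∃ m : ℕ, e = m • d then 1 else 0 := by
  have hc : (MvPowerSeries.constantCoeff (σ := Var) (R := ℤ)) (MvPowerSeries.monomial (R := ℤ) d 1) = 0 := by
    rw [← MvPowerSeries.coeff_zero_eq_constantCoeff_apply, MvPowerSeries.coeff_monomial,
      if_neg (by exact fun h => hd h.symm)]
  have hdeg : 0 < mydeg d := mydeg_pos d hd
  suffices H : ∀ n (e : Var →₀ ℕ), mydeg e = n →
      MvPowerSeries.coeff (R := ℤ) e (geomInv (MvPowerSeries.monomial (R := ℤ) d 1)) =
      if ∃ m : ℕ, e = m • d then 1 else 0 from H _ e rfl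
  intro n
  induction n using Nat.strong_induction_on with
  | _ n ih =>
    intro e he
    have key : MvPowerSeries.coeff (R := ℤ) e (geomInv (MvPowerSeries.monomial (R := ℤ) d 1)) =
        MvPowerSeries.coeff (R := ℤ) e (1 : MvPowerSeries Var ℤ) +
        (if d ≤ e then MvPowerSeries.coeff (R := ℤ) (e - d) (geomInv (MvPowerSeries.monomial (R := ℤ) d 1))
          else 0) := by
      conv_lhs => rw [geomInv_eq _ hc]
      rw [map_add, MvPowerSeries.coeff_monomial_mul]
      split_ifs <;> simp
    by_cases he0 : e = 0
    · subst he0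
      rw [key, MvPowerSeries.coeff_one, if_pos rfl, if_neg, if_pos ⟨0, by simp⟩, add_zero]
      intro hle
      exact hd (le_antisymm hle zero_le ▸ rfl)
    · rw [key, MvPowerSeries.coeff_one, if_neg he0, zero_add]
      by_cases hle : d ≤ e
      · have hsub : e - d + d = e := tsub_add_cancel_of_le hle
        have hdegsub : mydeg (e - d) < n := by
          have : mydeg (e - d) + mydeg d = mydeg e := by
            rw [← mydeg_add, hsub]
          omega
        rw [if_pos hle, ih _ hdegsub (e - d) rfl]
        congr 1
        apply propext
        constructor
        · rintro ⟨m, hm⟩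
          exact ⟨m + 1, by rw [← hsub, hm, succ_nsmul]⟩
        · rintro ⟨m, hm⟩
          match m with
          | 0 => exact absurd (by simpa using hm) he0
          | m + 1 =>
            refine ⟨m, ?_⟩
            rw [hm, succ_nsmul, add_tsub_cancel_right]
      · rw [if_neg hle, if_neg]
        rintro ⟨m, hm⟩
        match m with
        | 0 => exact he0 (by simpa using hm)
        | m + 1 =>
          apply hle
          rw [hm, succ_nsmul]
          exact le_add_self

/-- The exponent vector of the basic monomial attached to factor `(k, c)`. -/
noncomputable def dd (k : ℕ) (c : ℕ) : Var →₀ ℕ :=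
  if c < 2 then
    Finsupp.single (Sum.inr true) k + Finsupp.single (Sum.inr false) k +
      Finsupp.single (Sum.inl (2 * k)) 1
  else if c = 2 then
    Finsupp.single (Sum.inr true) (k - 1) + Finsupp.single (Sum.inr false) k +
      Finsupp.single (Sum.inl (2 * k - 1)) 1
  else
    Finsupp.single (Sum.inr true) k + Finsupp.single (Sum.inr false) (k - 1) +
      Finsupp.single (Sum.inl (2 * k - 1)) 1

lemma monE (k : ℕ) : va ^ k * vb ^ k * vt (2 * k) = MvPowerSeries.monomial (R := ℤ) (dd k 0) 1 := by
  rw [va, vb, vt, MvPowerSeries.X_pow_eq, MvPowerSeries.X_pow_eq, MvPowerSeries.X_def,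
    MvPowerSeries.monomial_mul_monomial, MvPowerSeries.monomial_mul_monomial]
  norm_num [dd]

lemma monO1 (k : ℕ) :
    va ^ (k - 1) * vb ^ k * vt (2 * k - 1) = MvPowerSeries.monomial (R := ℤ) (dd k 2) 1 := by
  rw [va, vb, vt, MvPowerSeries.X_pow_eq, MvPowerSeries.X_pow_eq, MvPowerSeries.X_def,
    MvPowerSeries.monomial_mul_monomial, MvPowerSeries.monomial_mul_monomial]
  norm_num [dd]

lemma monO2 (k : ℕ) :
    va ^ k * vb ^ (k - 1) * vt (2 * k - 1) = MvPowerSeries.monomial (R := ℤ) (dd k 3) 1 := by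
  rw [va, vb, vt, MvPowerSeries.X_pow_eq, MvPowerSeries.X_pow_eq, MvPowerSeries.X_def,
    MvPowerSeries.monomial_mul_monomial, MvPowerSeries.monomial_mul_monomial]
  norm_num [dd]

lemma dd_ne_zero (k : ℕ) (c : ℕ) : dd k c ≠ 0 := by
  unfold dd
  split_ifs <;> intro h
  · have := DFunLike.congr_fun h (Sum.inl (2 * k) : Var)
    simp [Finsupp.single_apply] at this
  · have := DFunLike.congr_fun h (Sum.inl (2 * k - 1) : Var)
    simp [Finsupp.single_apply] at this
  · have := DFunLike.congr_fun h (Sum.inl (2 * k - 1) : Var)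
    simp [Finsupp.single_apply] at this

lemma coeff_big_prod (N : ℕ) (E : Var →₀ ℕ) :
    MvPowerSeries.coeff (R := ℤ) E
        (∏ k ∈ Finset.Icc 1 N,
          (geomInv (va ^ k * vb ^ k * vt (2 * k))) ^ 2 *
            geomInv (va ^ (k - 1) * vb ^ k * vt (2 * k - 1)) *
            geomInv (va ^ k * vb ^ (k - 1) * vt (2 * k - 1))) =
    ((Finset.filter
        (fun l : (ℕ × Fin 4) →₀ (Var →₀ ℕ) =>
          ∀ j ∈ (Finset.Icc 1 N) ×ˢ (Finset.univ : Finset (Fin 4)),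
            ∃ m : ℕ, l j = m • dd j.1 (j.2 : ℕ))
        (((Finset.Icc 1 N) ×ˢ (Finset.univ : Finset (Fin 4))).finsuppAntidiag E)).card : ℤ) := by
  have hprod : (∏ k ∈ Finset.Icc 1 N,
          (geomInv (va ^ k * vb ^ k * vt (2 * k))) ^ 2 *
            geomInv (va ^ (k - 1) * vb ^ k * vt (2 * k - 1)) *
            geomInv (va ^ k * vb ^ (k - 1) * vt (2 * k - 1))) =
      ∏ j ∈ (Finset.Icc 1 N) ×ˢ (Finset.univ : Finset (Fin 4)),
        geomInv (MvPowerSeries.monomial (R := ℤ) (dd j.1 (j.2 : ℕ)) 1) := by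
    rw [Finset.prod_product]
    refine Finset.prod_congr rfl fun k _ => ?_
    rw [Fin.prod_univ_four]
    rw [monE, monO1, monO2, sq]
    have e1 : dd k 1 = dd k 0 := by norm_num [dd]
    have e3 : dd k ((3 : Fin 4) : ℕ) = dd k 3 := rfl
    simp [e1, e3]
  rw [hprod, MvPowerSeries.coeff_prod]
  rw [← Finset.sum_boole]
  refine Finset.sum_congr rfl fun l hl => ?_
  rw [← Finset.prod_boole]
  refine Finset.prod_congr rfl fun j hj => ?_
  rw [coeff_geomInv _ (dd_ne_zero j.1 (j.2 : ℕ))]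

/-! ### Evaluation lemmas for `dd` -/

lemma dd_a (k c : ℕ) :
    dd k c (Sum.inr true) = if c < 2 then k else if c = 2 then k - 1 else k := by
  unfold dd; split_ifs <;> simp [Finsupp.single_apply]

lemma dd_b (k c : ℕ) :
    dd k c (Sum.inr false) = if c < 2 then k else if c = 2 then k else k - 1 := by
  unfold dd; split_ifs <;> simp [Finsupp.single_apply]

lemma dd_t (k c i : ℕ) :
    dd k c (Sum.inl i) =
      if c < 2 then (if 2 * k = i then 1 else 0) else (if 2 * k - 1 = i then 1 else 0) := by
  unfold dd; split_ifs <;> simp_all [Finsupp.single_apply]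

/-! ### Pairing odd and even indices -/

lemma pair_sum {M : Type*} [AddCommMonoid M] (g : ℕ → M) (N : ℕ) :
    ∑ i ∈ Finset.Icc 1 (2 * N), g i = ∑ k ∈ Finset.Icc 1 N, (g (2 * k - 1) + g (2 * k)) := by
  induction N with
  | zero => simp
  | succ n ih =>
    have h1 : Finset.Icc 1 (2 * (n + 1)) =
        insert (2 * n + 2) (insert (2 * n + 1) (Finset.Icc 1 (2 * n))) := by
      ext x; simp only [Finset.mem_Icc, Finset.mem_insert]; omega
    have h2 : Finset.Icc 1 (n + 1) = insert (n + 1) (Finset.Icc 1 n) := by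
      ext x; simp only [Finset.mem_Icc, Finset.mem_insert]; omega
    rw [h1, h2, Finset.sum_insert (by simp only [Finset.mem_Icc, Finset.mem_insert]; omega),
      Finset.sum_insert (by simp only [Finset.mem_Icc]; omega),
      Finset.sum_insert (by simp only [Finset.mem_Icc]; omega), ih]
    have e1 : 2 * (n + 1) - 1 = 2 * n + 1 := by omega
    have e2 : 2 * (n + 1) = 2 * n + 2 := by omega
    rw [e1, e2]
    abel

lemma part_range {n : ℕ} (lam : Nat.Partition n) {i : ℕ}
    (h : Multiset.count i lam.parts ≠ 0) : 1 ≤ i ∧ i ≤ n := by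
  have hi : i ∈ lam.parts := Multiset.count_ne_zero.mp h
  exact ⟨lam.parts_pos hi, (Multiset.le_sum_of_mem hi).trans_eq lam.parts_sum⟩

lemma sum_parts_eq {M : Type*} [AddCommMonoid M] {n : ℕ} (lam : Nat.Partition n) (N : ℕ)
    (hN : n ≤ N) (g : ℕ → M) (hg : ∀ i, Multiset.count i lam.parts = 0 → g i = 0) :
    ∑ i ∈ lam.parts.toFinset, g i = ∑ k ∈ Finset.Icc 1 N, (g (2 * k - 1) + g (2 * k)) := by
  rw [← pair_sum]
  apply Finset.sum_subset
  · intro i hi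
    have hi' : i ∈ lam.parts := Multiset.mem_toFinset.mp hi
    have := part_range lam (Multiset.count_ne_zero.mpr hi')
    simp only [Finset.mem_Icc]
    omega
  · intro i _ hni
    exact hg i (Multiset.count_eq_zero.mpr (fun h => hni (Multiset.mem_toFinset.mpr h)))

lemma degOf_a {n : ℕ} (lam : Nat.Partition n) (p q : ℕ) : degOf lam p q (Sum.inr true) = p := by
  simp [degOf, Finset.sum_apply', Finsupp.single_apply]

lemma degOf_b {n : ℕ} (lam : Nat.Partition n) (p q : ℕ) : degOf lam p q (Sum.inr false) = q := by
  simp [degOf, Finset.sum_apply', Finsupp.single_apply]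

lemma degOf_t {n : ℕ} (lam : Nat.Partition n) (p q : ℕ) (i : ℕ) :
    degOf lam p q (Sum.inl i) = Multiset.count i lam.parts := by
  simp only [degOf, Finsupp.add_apply, Finset.sum_apply', Finsupp.single_apply]
  rw [if_neg (by simp), if_neg (by simp)]
  simp only [Sum.inl.injEq, zero_add]
  rw [Finset.sum_ite_eq' lam.parts.toFinset i (fun i' => Multiset.count i' lam.parts)]
  split_ifs with h
  · rfl
  · exact (Multiset.count_eq_zero.mpr (fun hm => h (Multiset.mem_toFinset.mpr hm))).symm

lemma sum_s_apply (N : ℕ) (l : ℕ × Fin 4 → (Var →₀ ℕ)) (v : Var) :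
    (∑ j ∈ (Finset.Icc 1 N) ×ˢ (Finset.univ : Finset (Fin 4)), l j) v =
      ∑ k ∈ Finset.Icc 1 N, (l (k, 0) v + l (k, 1) v + l (k, 2) v + l (k, 3) v) := by
  rw [Finset.sum_apply', Finset.sum_product]
  refine Finset.sum_congr rfl fun k _ => ?_
  rw [Fin.sum_univ_four]

lemma SYD.ext' {n : ℕ} {lam : Nat.Partition n} {p q : ℕ} {T1 T2 : SYD lam p q}
    (h : T1.f = T2.f) : T1 = T2 := by
  cases T1; cases T2; simpa using h

section Main

variable {n : ℕ} (lam : Nat.Partition n) {p q : ℕ}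

/-- The multiplicity of factor `(k, c)` attached to a signed Young diagram. -/
def multT (T : SYD lam p q) (j : ℕ × Fin 4) : ℕ :=
  if (j.2 : ℕ) = 0 then T.f (2 * j.1)
  else if (j.2 : ℕ) = 1 then Multiset.count (2 * j.1) lam.parts - T.f (2 * j.1)
  else if (j.2 : ℕ) = 2 then Multiset.count (2 * j.1 - 1) lam.parts - T.f (2 * j.1 - 1)
  else T.f (2 * j.1 - 1)

noncomputable def Lmap (N : ℕ) (T : SYD lam p q) : (ℕ × Fin 4) →₀ (Var →₀ ℕ) :=
  Finsupp.onFinset ((Finset.Icc 1 N) ×ˢ (Finset.univ : Finset (Fin 4)))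
    (fun j => if j.1 ∈ Finset.Icc 1 N then multT lam T j • dd j.1 (j.2 : ℕ) else 0)
    (fun j hj => by
      simp only [Finset.mem_product, Finset.mem_univ, and_true]
      by_contra h
      simp [h] at hj)

lemma Lmap_apply (N : ℕ) (T : SYD lam p q) (j : ℕ × Fin 4) :
    Lmap lam N T j = if j.1 ∈ Finset.Icc 1 N then multT lam T j • dd j.1 (j.2 : ℕ) else 0 := rfl

lemma f_eq_zero_of_count (T : SYD lam p q) {i : ℕ} (h : Multiset.count i lam.parts = 0) :
    T.f i = 0 := Nat.le_zero.mp (h ▸ T.le_mult i)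

lemma sum_Lmap (N : ℕ) (hN : n ≤ N) (T : SYD lam p q) :
    ∑ j ∈ (Finset.Icc 1 N) ×ˢ (Finset.univ : Finset (Fin 4)), Lmap lam N T j = degOf lam p q := by
  ext v
  rw [Finset.sum_apply' v, ← Finset.sum_apply' v,
    sum_s_apply N (fun j => Lmap lam N T j) v]
  match v with
  | .inr true =>
    rw [degOf_a]
    have hp := T.plus_eq
    rw [sum_parts_eq lam N hN _ (fun i hi => by
      rw [f_eq_zero_of_count lam T hi, hi]; simp)] at hp
    refine Eq.trans (Finset.sum_congr rfl fun k hk => ?_) hp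
    have hk1 : 1 ≤ k := (Finset.mem_Icc.mp hk).1
    have e1 : (2 * k - 1 + 1) / 2 = k := by omega
    have e2 : (2 * k - 1) / 2 = k - 1 := by omega
    have e3 : (2 * k + 1) / 2 = k := by omega
    have e4 : 2 * k / 2 = k := by omega
    simp only [Lmap_apply, if_pos (by exact hk), Finsupp.smul_apply, smul_eq_mul, multT, dd_a,
      e1, e2, e3, e4]
    norm_num [show ((3 : Fin 4) : ℕ) = 3 from rfl]
    try ring
  | .inr false =>
    rw [degOf_b]
    have hp := T.minus_eq
    rw [sum_parts_eq lam N hN _ (fun i hi => by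
      rw [f_eq_zero_of_count lam T hi, hi]; simp)] at hp
    refine Eq.trans (Finset.sum_congr rfl fun k hk => ?_) hp
    have hk1 : 1 ≤ k := (Finset.mem_Icc.mp hk).1
    have e1 : (2 * k - 1 + 1) / 2 = k := by omega
    have e2 : (2 * k - 1) / 2 = k - 1 := by omega
    have e3 : (2 * k + 1) / 2 = k := by omega
    have e4 : 2 * k / 2 = k := by omega
    simp only [Lmap_apply, if_pos (by exact hk), Finsupp.smul_apply, smul_eq_mul, multT, dd_b,
      e1, e2, e3, e4]
    norm_num [show ((3 : Fin 4) : ℕ) = 3 from rfl]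
    try ring
  | .inl i =>
    rw [degOf_t]
    have this1 := sum_parts_eq lam N hN
        (fun i' => if i' = i then Multiset.count i' lam.parts else 0)
        (fun i' hi' => by simp [hi'])
    rw [Finset.sum_ite_eq' lam.parts.toFinset i (fun i' => Multiset.count i' lam.parts)] at this1
    have hcnt : Multiset.count i lam.parts
        = if i ∈ lam.parts.toFinset then Multiset.count i lam.parts else 0 := by
      split_ifs with h
      · rfl
      · exact Multiset.count_eq_zero.mpr (fun hm => h (Multiset.mem_toFinset.mpr hm))
    rw [hcnt, this1]
    refine Finset.sum_congr rfl fun k hk => ?_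
    have hk1 : 1 ≤ k := (Finset.mem_Icc.mp hk).1
    simp only [Lmap_apply, if_pos (by exact hk), Finsupp.smul_apply, smul_eq_mul, multT, dd_t]
    norm_num [show ((3 : Fin 4) : ℕ) = 3 from rfl]
    have hle1 := T.le_mult (2 * k)
    have hle2 := T.le_mult (2 * k - 1)
    split_ifs <;> omega

/-! ### From a decomposition back to a signed Young diagram -/

/-- The multiplier of factor `(k, c)` extracted from a decomposition `l`. -/
noncomputable def Mc (l : (ℕ × Fin 4) →₀ (Var →₀ ℕ)) (k : ℕ) (c : Fin 4) : ℕ :=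
  l (k, c) (Sum.inl (if (c : ℕ) < 2 then 2 * k else 2 * k - 1))

/-- The leading-sign function extracted from a decomposition `l`. -/
noncomputable def fOf (l : (ℕ × Fin 4) →₀ (Var →₀ ℕ)) (i : ℕ) : ℕ :=
  if i % 2 = 0 then l ((i + 1) / 2, (0 : Fin 4)) (Sum.inl i)
  else l ((i + 1) / 2, (3 : Fin 4)) (Sum.inl i)

lemma fOf_even (l : (ℕ × Fin 4) →₀ (Var →₀ ℕ)) (k : ℕ) : fOf l (2 * k) = Mc l k 0 := by
  have h1 : (2 * k) % 2 = 0 := by omega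
  have h2 : (2 * k + 1) / 2 = k := by omega
  rw [fOf, if_pos h1, h2, Mc, if_pos (by norm_num)]

lemma fOf_odd (l : (ℕ × Fin 4) →₀ (Var →₀ ℕ)) (k : ℕ) (hk : 1 ≤ k) :
    fOf l (2 * k - 1) = Mc l k 3 := by
  have h1 : ¬((2 * k - 1) % 2 = 0) := by omega
  have h2 : (2 * k - 1 + 1) / 2 = k := by omega
  rw [fOf, if_neg h1, h2, Mc, if_neg (by norm_num [show ((3 : Fin 4) : ℕ) = 3 from rfl])]

section DirB

variable {n : ℕ} (lam : Nat.Partition n) {p q : ℕ} {N : ℕ}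
  {l : (ℕ × Fin 4) →₀ (Var →₀ ℕ)}

lemma l_zero (hsupp : l.support ⊆ (Finset.Icc 1 N) ×ˢ (Finset.univ : Finset (Fin 4)))
    (j : ℕ × Fin 4) (hj : j.1 ∉ Finset.Icc 1 N) : l j = 0 := by
  by_contra h
  have := hsupp (Finsupp.mem_support_iff.mpr h)
  rw [Finset.mem_product] at this
  exact hj this.1

lemma hM (hP : ∀ j ∈ (Finset.Icc 1 N) ×ˢ (Finset.univ : Finset (Fin 4)),
      ∃ m : ℕ, l j = m • dd j.1 (j.2 : ℕ))
    (k : ℕ) (hk : k ∈ Finset.Icc 1 N) (c : Fin 4) :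
    l (k, c) = Mc l k c • dd k (c : ℕ) := by
  obtain ⟨m, hm⟩ := hP (k, c) (Finset.mem_product.mpr ⟨hk, Finset.mem_univ c⟩)
  have h1 : dd k (c : ℕ) (Sum.inl (if (c : ℕ) < 2 then 2 * k else 2 * k - 1)) = 1 := by
    rw [dd_t]; split_ifs <;> omega
  have h2 : Mc l k c = m := by
    rw [Mc, hm, Finsupp.smul_apply, h1, smul_eq_mul, mul_one]
  rw [h2, hm]

lemma hcomp (hsum : ∑ j ∈ (Finset.Icc 1 N) ×ˢ (Finset.univ : Finset (Fin 4)), l j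
      = degOf lam p q)
    (hP : ∀ j ∈ (Finset.Icc 1 N) ×ˢ (Finset.univ : Finset (Fin 4)),
      ∃ m : ℕ, l j = m • dd j.1 (j.2 : ℕ)) (i : ℕ) :
    ∑ k ∈ Finset.Icc 1 N,
        ((Mc l k 0 + Mc l k 1) * (if 2 * k = i then 1 else 0) +
          (Mc l k 2 + Mc l k 3) * (if 2 * k - 1 = i then 1 else 0)) =
      Multiset.count i lam.parts := by
  have h0 := DFunLike.congr_fun hsum (Sum.inl i)
  rw [sum_s_apply N (fun j => l j) (Sum.inl i), degOf_t] at h0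
  refine Eq.trans (Finset.sum_congr rfl fun k hk => ?_) h0
  have e0 := DFunLike.congr_fun (hM hP k hk 0) (Sum.inl i)
  have e1 := DFunLike.congr_fun (hM hP k hk 1) (Sum.inl i)
  have e2 := DFunLike.congr_fun (hM hP k hk 2) (Sum.inl i)
  have e3 := DFunLike.congr_fun (hM hP k hk 3) (Sum.inl i)
  simp only [Finsupp.smul_apply, smul_eq_mul, dd_t,
    show ((0 : Fin 4) : ℕ) = 0 from rfl, show ((1 : Fin 4) : ℕ) = 1 from rfl,
    show ((2 : Fin 4) : ℕ) = 2 from rfl, show ((3 : Fin 4) : ℕ) = 3 from rfl] at e0 e1 e2 e3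
  rw [e0, e1, e2, e3]
  norm_num
  split_ifs <;> ring

lemma hEven (hsum : ∑ j ∈ (Finset.Icc 1 N) ×ˢ (Finset.univ : Finset (Fin 4)), l j
      = degOf lam p q)
    (hP : ∀ j ∈ (Finset.Icc 1 N) ×ˢ (Finset.univ : Finset (Fin 4)),
      ∃ m : ℕ, l j = m • dd j.1 (j.2 : ℕ))
    (k : ℕ) (hk : k ∈ Finset.Icc 1 N) :
    Mc l k 0 + Mc l k 1 = Multiset.count (2 * k) lam.parts := by
  have h := hcomp lam hsum hP (2 * k)
  have hk1 : 1 ≤ k := (Finset.mem_Icc.mp hk).1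
  rw [Finset.sum_eq_single_of_mem k hk] at h
  · rw [if_pos rfl, if_neg (by omega)] at h
    omega
  · intro k' hk' hne
    have hk'1 : 1 ≤ k' := (Finset.mem_Icc.mp hk').1
    rw [if_neg (by omega), if_neg (by omega)]
    ring

lemma hOdd (hsum : ∑ j ∈ (Finset.Icc 1 N) ×ˢ (Finset.univ : Finset (Fin 4)), l j
      = degOf lam p q)
    (hP : ∀ j ∈ (Finset.Icc 1 N) ×ˢ (Finset.univ : Finset (Fin 4)),
      ∃ m : ℕ, l j = m • dd j.1 (j.2 : ℕ))
    (k : ℕ) (hk : k ∈ Finset.Icc 1 N) :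
    Mc l k 2 + Mc l k 3 = Multiset.count (2 * k - 1) lam.parts := by
  have h := hcomp lam hsum hP (2 * k - 1)
  have hk1 : 1 ≤ k := (Finset.mem_Icc.mp hk).1
  rw [Finset.sum_eq_single_of_mem k hk] at h
  · rw [if_pos rfl, if_neg (by omega)] at h
    omega
  · intro k' hk' hne
    have hk'1 : 1 ≤ k' := (Finset.mem_Icc.mp hk').1
    rw [if_neg (by omega), if_neg (by omega)]
    ring

lemma hA (hsum : ∑ j ∈ (Finset.Icc 1 N) ×ˢ (Finset.univ : Finset (Fin 4)), l j
      = degOf lam p q)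
    (hP : ∀ j ∈ (Finset.Icc 1 N) ×ˢ (Finset.univ : Finset (Fin 4)),
      ∃ m : ℕ, l j = m • dd j.1 (j.2 : ℕ)) :
    ∑ k ∈ Finset.Icc 1 N,
        (Mc l k 0 * k + Mc l k 1 * k + Mc l k 2 * (k - 1) + Mc l k 3 * k) = p := by
  have h0 := DFunLike.congr_fun hsum (Sum.inr true)
  rw [sum_s_apply N (fun j => l j) (Sum.inr true), degOf_a] at h0
  refine Eq.trans (Finset.sum_congr rfl fun k hk => ?_) h0
  have e0 := DFunLike.congr_fun (hM hP k hk 0) (Sum.inr true)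
  have e1 := DFunLike.congr_fun (hM hP k hk 1) (Sum.inr true)
  have e2 := DFunLike.congr_fun (hM hP k hk 2) (Sum.inr true)
  have e3 := DFunLike.congr_fun (hM hP k hk 3) (Sum.inr true)
  simp only [Finsupp.smul_apply, smul_eq_mul, dd_a,
    show ((0 : Fin 4) : ℕ) = 0 from rfl, show ((1 : Fin 4) : ℕ) = 1 from rfl,
    show ((2 : Fin 4) : ℕ) = 2 from rfl, show ((3 : Fin 4) : ℕ) = 3 from rfl] at e0 e1 e2 e3
  rw [e0, e1, e2, e3]
  norm_num

lemma hB (hsum : ∑ j ∈ (Finset.Icc 1 N) ×ˢ (Finset.univ : Finset (Fin 4)), l j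
      = degOf lam p q)
    (hP : ∀ j ∈ (Finset.Icc 1 N) ×ˢ (Finset.univ : Finset (Fin 4)),
      ∃ m : ℕ, l j = m • dd j.1 (j.2 : ℕ)) :
    ∑ k ∈ Finset.Icc 1 N,
        (Mc l k 0 * k + Mc l k 1 * k + Mc l k 2 * k + Mc l k 3 * (k - 1)) = q := by
  have h0 := DFunLike.congr_fun hsum (Sum.inr false)
  rw [sum_s_apply N (fun j => l j) (Sum.inr false), degOf_b] at h0
  refine Eq.trans (Finset.sum_congr rfl fun k hk => ?_) h0
  have e0 := DFunLike.congr_fun (hM hP k hk 0) (Sum.inr false)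
  have e1 := DFunLike.congr_fun (hM hP k hk 1) (Sum.inr false)
  have e2 := DFunLike.congr_fun (hM hP k hk 2) (Sum.inr false)
  have e3 := DFunLike.congr_fun (hM hP k hk 3) (Sum.inr false)
  simp only [Finsupp.smul_apply, smul_eq_mul, dd_b,
    show ((0 : Fin 4) : ℕ) = 0 from rfl, show ((1 : Fin 4) : ℕ) = 1 from rfl,
    show ((2 : Fin 4) : ℕ) = 2 from rfl, show ((3 : Fin 4) : ℕ) = 3 from rfl] at e0 e1 e2 e3
  rw [e0, e1, e2, e3]
  norm_num

end DirB

section Build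

variable {n : ℕ} (lam : Nat.Partition n) {p q : ℕ} {N : ℕ}
  {l : (ℕ × Fin 4) →₀ (Var →₀ ℕ)}

lemma le_mult_Of (hsum : ∑ j ∈ (Finset.Icc 1 N) ×ˢ (Finset.univ : Finset (Fin 4)), l j
      = degOf lam p q)
    (hsupp : l.support ⊆ (Finset.Icc 1 N) ×ˢ (Finset.univ : Finset (Fin 4)))
    (hP : ∀ j ∈ (Finset.Icc 1 N) ×ˢ (Finset.univ : Finset (Fin 4)),
      ∃ m : ℕ, l j = m • dd j.1 (j.2 : ℕ)) :
    ∀ i, fOf l i ≤ Multiset.count i lam.parts := by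
  intro i
  by_cases hpar : i % 2 = 0
  · obtain ⟨k, rfl⟩ : ∃ k, i = 2 * k := ⟨i / 2, by omega⟩
    rw [fOf_even]
    by_cases hkN : k ∈ Finset.Icc 1 N
    · rw [← hEven lam hsum hP k hkN]; omega
    · have h0 : l (k, 0) = 0 := l_zero hsupp (k, 0) hkN
      simp [Mc, h0]
  · obtain ⟨k, rfl, hk1⟩ : ∃ k, i = 2 * k - 1 ∧ 1 ≤ k := ⟨(i + 1) / 2, by omega, by omega⟩
    rw [fOf_odd l k hk1]
    by_cases hkN : k ∈ Finset.Icc 1 N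
    · rw [← hOdd lam hsum hP k hkN]; omega
    · have h0 : l (k, 3) = 0 := l_zero hsupp (k, 3) hkN
      simp [Mc, h0]

/-- The signed Young diagram built from a decomposition. -/
noncomputable def Tof (hN : n ≤ N)
    (hsum : ∑ j ∈ (Finset.Icc 1 N) ×ˢ (Finset.univ : Finset (Fin 4)), l j
      = degOf lam p q)
    (hsupp : l.support ⊆ (Finset.Icc 1 N) ×ˢ (Finset.univ : Finset (Fin 4)))
    (hP : ∀ j ∈ (Finset.Icc 1 N) ×ˢ (Finset.univ : Finset (Fin 4)),
      ∃ m : ℕ, l j = m • dd j.1 (j.2 : ℕ)) :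
    SYD lam p q where
  f := fOf l
  le_mult := le_mult_Of lam hsum hsupp hP
  plus_eq := by
    rw [sum_parts_eq lam N hN _ (fun i hi => by
      have h0 : fOf l i = 0 := by have := le_mult_Of lam hsum hsupp hP i; omega
      rw [h0, hi]; simp)]
    refine Eq.trans (Finset.sum_congr rfl fun k hk => ?_) (hA lam hsum hP)
    have hk1 : 1 ≤ k := (Finset.mem_Icc.mp hk).1
    have e1 : (2 * k - 1 + 1) / 2 = k := by omega
    have e2 : (2 * k - 1) / 2 = k - 1 := by omega
    have e3 : (2 * k + 1) / 2 = k := by omega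
    have e4 : 2 * k / 2 = k := by omega
    rw [e1, e2, e3, e4, fOf_even, fOf_odd l k hk1, ← hEven lam hsum hP k hk,
      ← hOdd lam hsum hP k hk, Nat.add_sub_cancel, Nat.add_sub_cancel_left]
    ring
  minus_eq := by
    rw [sum_parts_eq lam N hN _ (fun i hi => by
      have h0 : fOf l i = 0 := by have := le_mult_Of lam hsum hsupp hP i; omega
      rw [h0, hi]; simp)]
    refine Eq.trans (Finset.sum_congr rfl fun k hk => ?_) (hB lam hsum hP)
    have hk1 : 1 ≤ k := (Finset.mem_Icc.mp hk).1
    have e1 : (2 * k - 1 + 1) / 2 = k := by omega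
    have e2 : (2 * k - 1) / 2 = k - 1 := by omega
    have e3 : (2 * k + 1) / 2 = k := by omega
    have e4 : 2 * k / 2 = k := by omega
    rw [e1, e2, e3, e4, fOf_even, fOf_odd l k hk1, ← hEven lam hsum hP k hk,
      ← hOdd lam hsum hP k hk, Nat.add_sub_cancel, Nat.add_sub_cancel_left]
    ring

end Build

section Equiv

variable {n : ℕ} (lam : Nat.Partition n) {p q : ℕ} (N : ℕ)

lemma Lmap_mem (hN : n ≤ N) (T : SYD lam p q) :
    Lmap lam N T ∈
      Finset.filter
        (fun l : (ℕ × Fin 4) →₀ (Var →₀ ℕ) =>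
          ∀ j ∈ (Finset.Icc 1 N) ×ˢ (Finset.univ : Finset (Fin 4)),
            ∃ m : ℕ, l j = m • dd j.1 (j.2 : ℕ))
        (((Finset.Icc 1 N) ×ˢ (Finset.univ : Finset (Fin 4))).finsuppAntidiag
          (degOf lam p q)) := by
  rw [Finset.mem_filter, Finset.mem_finsuppAntidiag]
  refine ⟨⟨sum_Lmap lam N hN T, Finsupp.support_onFinset_subset⟩, fun j hj => ?_⟩
  refine ⟨multT lam T j, ?_⟩
  rw [Lmap_apply, if_pos ((Finset.mem_product.mp hj).1)]

set_option maxHeartbeats 2000000 in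
/-- The bijection between signed Young diagrams and decompositions. -/
noncomputable def mainEquiv (hN : n ≤ N) :
    SYD lam p q ≃
      {x // x ∈
        Finset.filter
          (fun l : (ℕ × Fin 4) →₀ (Var →₀ ℕ) =>
            ∀ j ∈ (Finset.Icc 1 N) ×ˢ (Finset.univ : Finset (Fin 4)),
              ∃ m : ℕ, l j = m • dd j.1 (j.2 : ℕ))
          (((Finset.Icc 1 N) ×ˢ (Finset.univ : Finset (Fin 4))).finsuppAntidiag
            (degOf lam p q))} where
  toFun T := ⟨Lmap lam N T, Lmap_mem lam N hN T⟩
  invFun x := Tof lam hN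
    ((Finset.mem_finsuppAntidiag.mp (Finset.mem_filter.mp x.2).1).1)
    ((Finset.mem_finsuppAntidiag.mp (Finset.mem_filter.mp x.2).1).2)
    ((Finset.mem_filter.mp x.2).2)
  left_inv T := by
    apply SYD.ext'
    funext i
    show fOf (Lmap lam N T) i = T.f i
    by_cases hpar : i % 2 = 0
    · obtain ⟨k, rfl⟩ : ∃ k, i = 2 * k := ⟨i / 2, by omega⟩
      rw [fOf_even]
      by_cases hkN : k ∈ Finset.Icc 1 N
      · rw [Mc, if_pos (by norm_num), Lmap_apply, if_pos (by exact hkN)]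
        rw [Finsupp.smul_apply, dd_t, smul_eq_mul]
        rw [if_pos (by norm_num), if_pos rfl, mul_one]
        rw [multT, if_pos (by norm_num)]
      · have hc : Multiset.count (2 * k) lam.parts = 0 := by
          by_contra h
          have := part_range lam h
          simp only [Finset.mem_Icc, not_and, not_le] at hkN
          omega
        rw [Mc, if_pos (by norm_num), Lmap_apply, if_neg (by exact hkN)]
        rw [f_eq_zero_of_count lam T hc]
        simp
    · obtain ⟨k, rfl, hk1⟩ : ∃ k, i = 2 * k - 1 ∧ 1 ≤ k := ⟨(i + 1) / 2, by omega, by omega⟩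
      rw [fOf_odd _ k hk1]
      by_cases hkN : k ∈ Finset.Icc 1 N
      · rw [Mc, if_neg (by norm_num [show ((3 : Fin 4) : ℕ) = 3 from rfl]),
          Lmap_apply, if_pos (by exact hkN)]
        rw [Finsupp.smul_apply, dd_t, smul_eq_mul]
        rw [if_neg (by norm_num [show ((3 : Fin 4) : ℕ) = 3 from rfl]), if_pos rfl, mul_one]
        rw [multT, if_neg (by norm_num [show ((3 : Fin 4) : ℕ) = 3 from rfl]),
          if_neg (by norm_num [show ((3 : Fin 4) : ℕ) = 3 from rfl]),
          if_neg (by norm_num [show ((3 : Fin 4) : ℕ) = 3 from rfl])]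
      · have hc : Multiset.count (2 * k - 1) lam.parts = 0 := by
          by_contra h
          have := part_range lam h
          simp only [Finset.mem_Icc, not_and, not_le] at hkN
          omega
        rw [Mc, if_neg (by norm_num [show ((3 : Fin 4) : ℕ) = 3 from rfl]),
          Lmap_apply, if_neg (by exact hkN)]
        rw [f_eq_zero_of_count lam T hc]
        simp
  right_inv x := by
    obtain ⟨l, hl⟩ := x
    have hsum := (Finset.mem_finsuppAntidiag.mp (Finset.mem_filter.mp hl).1).1
    have hsupp := (Finset.mem_finsuppAntidiag.mp (Finset.mem_filter.mp hl).1).2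
    have hP := (Finset.mem_filter.mp hl).2
    apply Subtype.ext
    show Lmap lam N _ = l
    ext j v
    obtain ⟨k, c⟩ := j
    by_cases hkN : k ∈ Finset.Icc 1 N
    · rw [Lmap_apply, if_pos (by exact hkN)]
      have hmc := hM hP k hkN c
      have hmult : multT lam (Tof lam hN hsum hsupp hP) (k, c) = Mc l k c := by
        have hk1 : 1 ≤ k := (Finset.mem_Icc.mp hkN).1
        fin_cases c
        · show (if _ then _ else _) = _
          rw [if_pos rfl]
          show fOf l (2 * k) = _
          rw [fOf_even]; rfl
        · show (if _ then _ else _) = _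
          rw [if_neg (by norm_num), if_pos rfl]
          show Multiset.count (2 * k) lam.parts - fOf l (2 * k) = _
          rw [fOf_even, ← hEven lam hsum hP k hkN, Nat.add_sub_cancel_left]; rfl
        · show (if _ then _ else _) = _
          rw [if_neg (by norm_num), if_neg (by norm_num), if_pos rfl]
          show Multiset.count (2 * k - 1) lam.parts - fOf l (2 * k - 1) = _
          rw [fOf_odd l k hk1, ← hOdd lam hsum hP k hkN, Nat.add_sub_cancel]; rfl
        · show (if _ then _ else _) = _
          rw [if_neg (by norm_num [show ((3 : Fin 4) : ℕ) = 3 from rfl]),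
            if_neg (by norm_num [show ((3 : Fin 4) : ℕ) = 3 from rfl]),
            if_neg (by norm_num [show ((3 : Fin 4) : ℕ) = 3 from rfl])]
          show fOf l (2 * k - 1) = _
          rw [fOf_odd l k hk1]; rfl
      rw [hmult, ← hmc]
    · rw [Lmap_apply, if_neg (by exact hkN), l_zero hsupp (k, c) hkN]

end Equiv

/-- Generating function for the number of signed Young diagrams (type AIII):
the coefficient of `a^p b^q t_λ` in
`∏_{k≥1} (1 - a^k b^k t_{2k})⁻² (1 - a^{k-1} b^k t_{2k-1})⁻¹ (1 - a^k b^{k-1} t_{2k-1})⁻¹`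
is `#syd(λ; p, q)`.  Only the factors with `k ≤ p + q` contribute to this
coefficient, so the infinite product is represented by the finite product over
`1 ≤ k ≤ N` for any `N ≥ p + q`. -/
theorem stmt0 (p q : ℕ) (lam : Nat.Partition (p + q)) (N : ℕ) (hN : p + q ≤ N) :
    (Nat.card (SYD lam p q) : ℤ) =
      MvPowerSeries.coeff (R := ℤ) (degOf lam p q)
        (∏ k ∈ Finset.Icc 1 N,
          (geomInv (va ^ k * vb ^ k * vt (2 * k))) ^ 2 *
            geomInv (va ^ (k - 1) * vb ^ k * vt (2 * k - 1)) *
            geomInv (va ^ k * vb ^ (k - 1) * vt (2 * k - 1))) := by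
  rw [coeff_big_prod N (degOf lam p q)]
  have hcard : Nat.card (SYD lam p q) =
      (Finset.filter
        (fun l : (ℕ × Fin 4) →₀ (Var →₀ ℕ) =>
          ∀ j ∈ (Finset.Icc 1 N) ×ˢ (Finset.univ : Finset (Fin 4)),
            ∃ m : ℕ, l j = m • dd j.1 (j.2 : ℕ))
        (((Finset.Icc 1 N) ×ˢ (Finset.univ : Finset (Fin 4))).finsuppAntidiag
          (degOf lam p q))).card :=
    (Nat.card_congr (mainEquiv lam N hN)).trans (Nat.card_eq_finsetCard _)
  rw [hcard]
end Main
end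

section
/- Let a, b, t_1, t_2, … be commuting formal variables. Then in the ring of formal power series over ℤ one has the identity Σ_{p ≥ 0} Σ_{λ ⊢ 2p} #syd_DIII(λ;p,p) · a^p b^p t_λ = ∏_{k=1}^∞ (1 − a^{2k} b^{2k} t_{2k}^2)^{−2} · (1 − a^{2k−1} b^{2k−1} t_{2k−1}^2)^{−1}, where t_λ = t_1^{m_1} t_2^{m_2} ⋯ for λ = [1^{m_1} · 2^{m_2} ⋯] (m_i the multiplicity of i in λ), and #syd_DIII(λ;p,p) = 0 unless every part of λ has even multiplicity. Equivalently: for all p ≥ 0 and every partition λ of 2p, #syd_DIII(λ;p,p) equals the coefficient of a^p b^p t_λ in the infinite product. -/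
open Finset

/- ### Auxiliary material -/

open Classical in
/-- The geometric series `∑ₙ (monomial e)ⁿ`. -/
noncomputable def G (e : Var →₀ ℕ) : MvPowerSeries Var ℤ :=
  fun d => if ∃ n : ℕ, d = n • e then 1 else 0

open Classical in
lemma coeff_G (e d : Var →₀ ℕ) :
    MvPowerSeries.coeff (R := ℤ) d (G e) = if ∃ n : ℕ, d = n • e then 1 else 0 := rfl

lemma geom_mul (e : Var →₀ ℕ) (he : e ≠ 0) :
    (1 - MvPowerSeries.monomial (R := ℤ) e 1) * G e = 1 := by
  classical
  ext d
  rw [sub_mul, one_mul, map_sub, MvPowerSeries.coeff_monomial_mul, coeff_G,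
    MvPowerSeries.coeff_one]
  by_cases hd : d = 0
  · subst hd
    rw [if_pos ⟨0, by simp⟩, if_neg, if_pos rfl]
    · ring
    · intro hle
      exact he (le_antisymm hle zero_le)
  · rw [if_neg hd]
    by_cases h1 : ∃ n : ℕ, d = n • e
    · obtain ⟨n, rfl⟩ := h1
      have hn : n ≠ 0 := by rintro rfl; simp at hd
      obtain ⟨m, rfl⟩ := Nat.exists_eq_succ_of_ne_zero hn
      have hle : e ≤ (m + 1) • e := by
        rw [succ_nsmul]; exact le_add_self
      rw [if_pos ⟨m + 1, rfl⟩, if_pos hle, coeff_G, if_pos ⟨m, by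
        rw [succ_nsmul, add_tsub_cancel_right]⟩]
      ring
    · rw [if_neg h1]
      by_cases hle : e ≤ d
      · rw [if_pos hle, coeff_G, if_neg, mul_zero, sub_zero]
        rintro ⟨n, hn⟩
        exact h1 ⟨n + 1, by rw [succ_nsmul, ← hn, tsub_add_cancel_of_le hle]⟩
      · simp [if_neg hle]

lemma geomInv_monomial (e : Var →₀ ℕ) (he : e ≠ 0) :
    geomInv (MvPowerSeries.monomial (R := ℤ) e 1) = G e := by
  have hc : MvPowerSeries.constantCoeff (σ := Var) (R := ℤ) (1 - MvPowerSeries.monomial (R := ℤ) e 1)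
      = ((1 : ℤˣ) : ℤ) := by
    rw [map_sub, map_one, ← MvPowerSeries.coeff_zero_eq_constantCoeff_apply,
      MvPowerSeries.coeff_monomial, if_neg (by exact fun h => he h.symm), sub_zero, Units.val_one]
  have h2 : (1 - MvPowerSeries.monomial (R := ℤ) e 1) * geomInv (MvPowerSeries.monomial (R := ℤ) e 1) = 1 :=
    MvPowerSeries.mul_invOfUnit _ 1 hc
  calc geomInv (MvPowerSeries.monomial (R := ℤ) e 1)
      = (G e * (1 - MvPowerSeries.monomial (R := ℤ) e 1)) * geomInv (MvPowerSeries.monomial (R := ℤ) e 1) := by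
        rw [mul_comm (G e), geom_mul e he, one_mul]
    _ = G e := by rw [mul_assoc, h2, mul_one]

/-- Exponent of the monomial `a^j b^j t_j^2`. -/
noncomputable def ee (j : ℕ) : Var →₀ ℕ :=
  Finsupp.single (Sum.inr true) j + Finsupp.single (Sum.inr false) j +
    Finsupp.single (Sum.inl j) 2

lemma ee_apply_inl (j i : ℕ) : ee j (Sum.inl i) = if j = i then 2 else 0 := by
  simp [ee, Finsupp.single_apply]

lemma ee_ne_zero (j : ℕ) : ee j ≠ 0 := by
  intro h
  have := congrArg (fun f : Var →₀ ℕ => f (Sum.inl j)) h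
  simp [ee_apply_inl] at this

lemma factor_eq (j : ℕ) :
    va ^ j * vb ^ j * vt j ^ 2 = MvPowerSeries.monomial (R := ℤ) (ee j) 1 := by
  rw [va, vb, vt, MvPowerSeries.X_pow_eq, MvPowerSeries.X_pow_eq, MvPowerSeries.X_pow_eq,
    MvPowerSeries.monomial_mul_monomial, MvPowerSeries.monomial_mul_monomial, ee]
  norm_num

example : True := trivial

noncomputable def E (x : ℕ × Fin 3) : Var →₀ ℕ :=
  if x.2 = 2 then ee (2 * x.1 - 1) else ee (2 * x.1)

lemma prod_eq (N : ℕ) :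
    (∏ k ∈ Finset.Icc 1 N,
      (geomInv (va ^ (2 * k) * vb ^ (2 * k) * vt (2 * k) ^ 2)) ^ 2 *
        geomInv (va ^ (2 * k - 1) * vb ^ (2 * k - 1) * vt (2 * k - 1) ^ 2)) =
    ∏ x ∈ (Finset.Icc 1 N) ×ˢ (Finset.univ : Finset (Fin 3)), G (E x) := by
  rw [Finset.prod_product]
  apply Finset.prod_congr rfl
  intro k _
  rw [Fin.prod_univ_three]
  simp only [E]
  simp only [show ((0:Fin 3) = 2) = False from by simp [Fin.ext_iff],
    show ((1:Fin 3) = 2) = False from by simp [Fin.ext_iff], if_false, if_true]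
  rw [factor_eq, factor_eq, geomInv_monomial _ (ee_ne_zero _),
    geomInv_monomial _ (ee_ne_zero _), sq]

open Classical in
lemma coeff_rhs (d : Var →₀ ℕ) (N : ℕ) :
    MvPowerSeries.coeff (R := ℤ) d
        (∏ x ∈ (Finset.Icc 1 N) ×ˢ (Finset.univ : Finset (Fin 3)), G (E x)) =
      (((Finset.Icc 1 N ×ˢ (Finset.univ : Finset (Fin 3))).finsuppAntidiag d).filter
        (fun l => ∀ x ∈ Finset.Icc 1 N ×ˢ (Finset.univ : Finset (Fin 3)),
          ∃ n : ℕ, l x = n • E x)).card := by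
  rw [MvPowerSeries.coeff_prod, ← Finset.sum_boole]
  apply Finset.sum_congr rfl
  intro l _
  by_cases h : ∀ x ∈ Finset.Icc 1 N ×ˢ (Finset.univ : Finset (Fin 3)), ∃ n : ℕ, l x = n • E x
  · rw [if_pos h, Finset.prod_eq_one]
    intro x hx
    rw [coeff_G, if_pos (h x hx)]
  · push_neg at h
    obtain ⟨x, hx, hn⟩ := h
    rw [if_neg (by push_neg; exact ⟨x, hx, hn⟩), Finset.prod_eq_zero hx]
    rw [coeff_G, if_neg (not_exists.mpr hn)]

/- ### Combinatorial side -/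

lemma sum_double {M : Type*} [AddCommMonoid M] (g : ℕ → M) (N : ℕ) :
    ∑ j ∈ Finset.Icc 1 (2 * N), g j = ∑ k ∈ Finset.Icc 1 N, (g (2 * k) + g (2 * k - 1)) := by
  induction N with
  | zero => simp
  | succ n ih =>
    rw [show 2 * (n + 1) = (2 * n + 1) + 1 by ring, Finset.sum_Icc_succ_top (by omega),
      Finset.sum_Icc_succ_top (by omega), ih, Finset.sum_Icc_succ_top (by omega : 1 ≤ n + 1),
      show 2 * (n + 1) = (2 * n + 1) + 1 by ring, show (2 * n + 1) + 1 - 1 = 2 * n + 1 by omega]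
    abel

section Comb

variable {p : ℕ} (lam : Nat.Partition (2 * p))

lemma count_zero_out {i : ℕ} (h : i = 0 ∨ 2 * p < i) : Multiset.count i lam.parts = 0 := by
  rw [Multiset.count_eq_zero]
  intro hi
  have h1 := lam.parts_pos hi
  have h2 : i ≤ 2 * p := (Multiset.le_sum_of_mem hi).trans_eq lam.parts_sum
  omega

lemma sum_count_eq : ∑ i ∈ lam.parts.toFinset, Multiset.count i lam.parts * i = 2 * p := by
  have h := Finset.sum_multiset_map_count lam.parts (id : ℕ → ℕ)
  simp only [Multiset.map_id', smul_eq_mul, id] at h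
  rw [← h]
  exact lam.parts_sum

lemma toFinset_subset_Icc {N : ℕ} (hN : 2 * p ≤ N) :
    lam.parts.toFinset ⊆ Finset.Icc 1 (2 * N) := by
  intro i hi
  rw [Multiset.mem_toFinset] at hi
  have h1 := lam.parts_pos hi
  have h2 : i ≤ 2 * p := (Multiset.le_sum_of_mem hi).trans_eq lam.parts_sum
  rw [Finset.mem_Icc]; omega

lemma sum_count_Icc {N : ℕ} (hN : 2 * p ≤ N) :
    ∑ j ∈ Finset.Icc 1 (2 * N), Multiset.count j lam.parts * j = 2 * p := by
  rw [← Finset.sum_subset (toFinset_subset_Icc lam hN) (fun j _ hj => by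
    rw [Multiset.count_eq_zero.2 (fun h => hj (Multiset.mem_toFinset.2 h)), zero_mul])]
  exact sum_count_eq lam

lemma degOf_apply_inl (q j : ℕ) :
    degOf lam p q (Sum.inl j) = Multiset.count j lam.parts := by
  classical
  simp only [degOf, Finsupp.add_apply, Finset.sum_apply', Finsupp.single_apply]
  rw [if_neg (by simp), if_neg (by simp)]
  simp only [Sum.inl.injEq, zero_add]
  rw [Finset.sum_ite_eq' lam.parts.toFinset j (fun i => Multiset.count i lam.parts)]
  split_ifs with h
  · rfl
  · rw [Multiset.count_eq_zero.2 (fun hm => h (Multiset.mem_toFinset.2 hm))]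

end Comb

lemma ee_apply_inr (j : ℕ) (c : Bool) : ee j (Sum.inr c) = j := by
  cases c <;> simp [ee, Finsupp.single_apply]

lemma E_fst (k : ℕ) : E (k, 0) = ee (2 * k) := by
  simp [E, show ((0 : Fin 3) = 2) = False from by simp [Fin.ext_iff]]

lemma E_snd (k : ℕ) : E (k, 1) = ee (2 * k) := by
  simp [E, show ((1 : Fin 3) = 2) = False from by simp [Fin.ext_iff]]

lemma E_thd (k : ℕ) : E (k, 2) = ee (2 * k - 1) := by simp [E]

noncomputable def cOf (m f : ℕ → ℕ) (x : ℕ × Fin 3) : ℕ :=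
  if x.2 = 0 then f (2 * x.1) / 2
  else if x.2 = 1 then (m (2 * x.1) - f (2 * x.1)) / 2
  else m (2 * x.1 - 1) / 2

lemma cOf_0 (m f : ℕ → ℕ) (k : ℕ) : cOf m f (k, 0) = f (2 * k) / 2 := rfl
lemma cOf_1 (m f : ℕ → ℕ) (k : ℕ) : cOf m f (k, 1) = (m (2 * k) - f (2 * k)) / 2 := rfl
lemma cOf_2 (m f : ℕ → ℕ) (k : ℕ) : cOf m f (k, 2) = m (2 * k - 1) / 2 := rfl

noncomputable def lOf (N : ℕ) (m f : ℕ → ℕ) : (ℕ × Fin 3) →₀ (Var →₀ ℕ) :=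
  Finsupp.onFinset (Finset.Icc 1 N ×ˢ Finset.univ)
    (fun x => if x ∈ Finset.Icc 1 N ×ˢ (Finset.univ : Finset (Fin 3))
      then cOf m f x • E x else 0)
    (fun x h => by by_contra hx; simp [hx] at h)

lemma lOf_apply_mem {N : ℕ} {m f : ℕ → ℕ} {x : ℕ × Fin 3}
    (hx : x ∈ Finset.Icc 1 N ×ˢ (Finset.univ : Finset (Fin 3))) :
    lOf N m f x = cOf m f x • E x := by
  simp only [lOf, Finsupp.onFinset_apply, if_pos hx]

lemma lOf_apply_not_mem {N : ℕ} {m f : ℕ → ℕ} {x : ℕ × Fin 3}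
    (hx : x ∉ Finset.Icc 1 N ×ˢ (Finset.univ : Finset (Fin 3))) :
    lOf N m f x = 0 := by
  simp only [lOf, Finsupp.onFinset_apply, if_neg hx]

lemma two_mul_term (cnt fv i : ℕ) (hle : fv ≤ cnt) (hodd : Odd i → 2 * fv = cnt) :
    2 * (fv * ((i + 1) / 2) + (cnt - fv) * (i / 2)) = cnt * i ∧
      2 * (fv * (i / 2) + (cnt - fv) * ((i + 1) / 2)) = cnt * i := by
  rcases Nat.even_or_odd i with ⟨a, ha⟩ | ⟨a, ha⟩
  · subst ha
    have h1 : (a + a + 1) / 2 = a := by omega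
    have h2 : (a + a) / 2 = a := by omega
    have h3 : fv * a + (cnt - fv) * a = cnt * a := by
      rw [← add_mul, Nat.add_sub_cancel' hle]
    rw [h1, h2, h3]
    constructor <;> ring
  · have hm := hodd ⟨a, ha⟩
    subst ha
    have h1 : (2 * a + 1 + 1) / 2 = a + 1 := by omega
    have h2 : (2 * a + 1) / 2 = a := by omega
    have h3 : cnt - fv = fv := by omega
    rw [h1, h2, h3, ← hm]
    constructor <;> ring

section Comb2

variable {p : ℕ} (lam : Nat.Partition (2 * p))

lemma plus_minus_eq (f : ℕ → ℕ)
    (hle : ∀ i, f i ≤ Multiset.count i lam.parts)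
    (hodd : ∀ i, Odd i → 2 * f i = Multiset.count i lam.parts) :
    (∑ i ∈ lam.parts.toFinset,
        (f i * ((i + 1) / 2) + (Multiset.count i lam.parts - f i) * (i / 2)) = p) ∧
      (∑ i ∈ lam.parts.toFinset,
        (f i * (i / 2) + (Multiset.count i lam.parts - f i) * ((i + 1) / 2)) = p) := by
  have hkey := fun i => two_mul_term (Multiset.count i lam.parts) (f i) i (hle i) (hodd i)
  have h1 : 2 * ∑ i ∈ lam.parts.toFinset,
      (f i * ((i + 1) / 2) + (Multiset.count i lam.parts - f i) * (i / 2)) = 2 * p := by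
    rw [Finset.mul_sum, Finset.sum_congr rfl (fun i _ => (hkey i).1), sum_count_eq lam]
  have h2 : 2 * ∑ i ∈ lam.parts.toFinset,
      (f i * (i / 2) + (Multiset.count i lam.parts - f i) * ((i + 1) / 2)) = 2 * p := by
    rw [Finset.mul_sum, Finset.sum_congr rfl (fun i _ => (hkey i).2), sum_count_eq lam]
  omega

end Comb2

section Comb3

variable {p : ℕ} (lam : Nat.Partition (2 * p))

lemma sum_lOf {N : ℕ} (hN : 2 * p ≤ N) (f : ℕ → ℕ)
    (hle : ∀ i, f i ≤ Multiset.count i lam.parts)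
    (hodd : ∀ i, Odd i → 2 * f i = Multiset.count i lam.parts)
    (heven : ∀ i, Even i → Even (Multiset.count i lam.parts) ∧ Even (f i)) :
    ∑ x ∈ Finset.Icc 1 N ×ˢ (Finset.univ : Finset (Fin 3)),
      lOf N (fun i => Multiset.count i lam.parts) f x = degOf lam p p := by
  set m : ℕ → ℕ := fun i => Multiset.count i lam.parts with hm
  have hdvd : ∀ j, 2 ∣ m j := by
    intro j
    rcases Nat.even_or_odd j with hj | hj
    · obtain ⟨a, ha⟩ := (heven j hj).1
      have h4 : m j = Multiset.count j lam.parts := rfl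
      exact ⟨a, by omega⟩
    · exact ⟨f j, (hodd j hj).symm⟩
  have step1 : ∑ x ∈ Finset.Icc 1 N ×ˢ (Finset.univ : Finset (Fin 3)), lOf N m f x
      = ∑ j ∈ Finset.Icc 1 (2 * N), (m j / 2) • ee j := by
    rw [sum_double (fun j => (m j / 2) • ee j) N,
      Finset.sum_congr rfl (fun x hx => lOf_apply_mem hx), Finset.sum_product]
    apply Finset.sum_congr rfl
    intro k _
    rw [Fin.sum_univ_three, cOf_0, cOf_1, cOf_2, E_fst, E_snd, E_thd, ← add_smul]
    have heq : f (2 * k) / 2 + (m (2 * k) - f (2 * k)) / 2 = m (2 * k) / 2 := by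
      obtain ⟨a, ha⟩ := (heven (2 * k) ⟨k, by ring⟩).1
      obtain ⟨b, hb⟩ := (heven (2 * k) ⟨k, by ring⟩).2
      have h3 := hle (2 * k)
      have h4 : m (2 * k) = Multiset.count (2 * k) lam.parts := rfl
      omega
    rw [heq]
  rw [step1]
  have expand : ∀ j ∈ Finset.Icc 1 (2 * N), (m j / 2) • ee j
      = Finsupp.single (Sum.inr true : Var) (m j / 2 * j)
        + Finsupp.single (Sum.inr false : Var) (m j / 2 * j)
        + Finsupp.single (Sum.inl j : Var) (m j) := by
    intro j _
    simp only [ee, smul_add, Finsupp.smul_single, smul_eq_mul]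
    rw [Nat.div_mul_cancel (hdvd j)]
  rw [Finset.sum_congr rfl expand, Finset.sum_add_distrib, Finset.sum_add_distrib]
  have hval : ∑ j ∈ Finset.Icc 1 (2 * N), m j / 2 * j = p := by
    have h2 : ∑ j ∈ Finset.Icc 1 (2 * N), m j * j = 2 * p := sum_count_Icc lam hN
    have h4 : 2 * ∑ j ∈ Finset.Icc 1 (2 * N), m j / 2 * j
        = ∑ j ∈ Finset.Icc 1 (2 * N), m j * j := by
      rw [Finset.mul_sum]
      apply Finset.sum_congr rfl
      intro j _
      rw [← mul_assoc, Nat.mul_div_cancel' (hdvd j)]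
    omega
  have ha : ∀ c : Bool, ∑ j ∈ Finset.Icc 1 (2 * N), Finsupp.single (Sum.inr c : Var) (m j / 2 * j)
      = Finsupp.single (Sum.inr c : Var) p := by
    intro c
    rw [← Finsupp.single_finset_sum, hval]
  have hc : ∑ j ∈ Finset.Icc 1 (2 * N), Finsupp.single (Sum.inl j : Var) (m j)
      = ∑ i ∈ lam.parts.toFinset, Finsupp.single (Sum.inl i : Var) (m i) := by
    refine (Finset.sum_subset (toFinset_subset_Icc lam hN) ?_).symm
    intro j _ hj
    rw [show m j = 0 from Multiset.count_eq_zero.2 (fun h => hj (Multiset.mem_toFinset.2 h)),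
      Finsupp.single_zero]
  rw [ha true, ha false, hc]
  rfl

end Comb3

lemma sum_eval_inl {N : ℕ} (l : (ℕ × Fin 3) →₀ (Var →₀ ℕ)) (n : ℕ × Fin 3 → ℕ)
    (hn : ∀ x ∈ Finset.Icc 1 N ×ˢ (Finset.univ : Finset (Fin 3)), l x = n x • E x) (j : ℕ) :
    ∑ x ∈ Finset.Icc 1 N ×ˢ (Finset.univ : Finset (Fin 3)), l x (Sum.inl j)
      = ∑ k ∈ Finset.Icc 1 N,
        (n (k, 0) * (if 2 * k = j then 2 else 0) + n (k, 1) * (if 2 * k = j then 2 else 0)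
          + n (k, 2) * (if 2 * k - 1 = j then 2 else 0)) := by
  rw [Finset.sum_product]
  apply Finset.sum_congr rfl
  intro k hk
  rw [Fin.sum_univ_three,
    hn (k, 0) (Finset.mem_product.2 ⟨hk, Finset.mem_univ _⟩),
    hn (k, 1) (Finset.mem_product.2 ⟨hk, Finset.mem_univ _⟩),
    hn (k, 2) (Finset.mem_product.2 ⟨hk, Finset.mem_univ _⟩),
    E_fst, E_snd, E_thd, Finsupp.smul_apply, Finsupp.smul_apply, Finsupp.smul_apply,
    ee_apply_inl, ee_apply_inl, smul_eq_mul, smul_eq_mul, smul_eq_mul]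

lemma coord_eqs {p N : ℕ} (lam : Nat.Partition (2 * p))
    (l : (ℕ × Fin 3) →₀ (Var →₀ ℕ)) (n : ℕ × Fin 3 → ℕ)
    (hn : ∀ x ∈ Finset.Icc 1 N ×ˢ (Finset.univ : Finset (Fin 3)), l x = n x • E x)
    (hsum : ∑ x ∈ Finset.Icc 1 N ×ˢ (Finset.univ : Finset (Fin 3)), l x = degOf lam p p)
    {k : ℕ} (hk : k ∈ Finset.Icc 1 N) :
    2 * n (k, 0) + 2 * n (k, 1) = Multiset.count (2 * k) lam.parts ∧
      2 * n (k, 2) = Multiset.count (2 * k - 1) lam.parts := by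
  have hev : ∀ j, ∑ x ∈ Finset.Icc 1 N ×ˢ (Finset.univ : Finset (Fin 3)), l x (Sum.inl j)
      = Multiset.count j lam.parts := by
    intro j
    rw [← Finset.sum_apply', hsum, degOf_apply_inl]
  have hk1 : 1 ≤ k := (Finset.mem_Icc.1 hk).1
  constructor
  · have h := hev (2 * k)
    rw [sum_eval_inl l n hn, Finset.sum_eq_single_of_mem k hk (fun b hb hbk => by
      have hb1 : 1 ≤ b := (Finset.mem_Icc.1 hb).1
      rw [if_neg (by omega), if_neg (by omega)]
      ring)] at h
    rw [if_pos rfl, if_neg (by omega)] at h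
    omega
  · have h := hev (2 * k - 1)
    rw [sum_eval_inl l n hn, Finset.sum_eq_single_of_mem k hk (fun b hb hbk => by
      have hb1 : 1 ≤ b := (Finset.mem_Icc.1 hb).1
      rw [if_neg (by omega), if_neg (by omega)]
      ring)] at h
    rw [if_neg (by omega), if_pos rfl] at h
    omega

noncomputable def FOf (N : ℕ) (mt : ℕ → ℕ) (l : (ℕ × Fin 3) →₀ (Var →₀ ℕ)) : ℕ → ℕ :=
  fun i => if 2 ∣ i then (if i / 2 ∈ Finset.Icc 1 N then l (i / 2, 0) (Sum.inl i) else 0)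
    else mt i / 2

set_option maxHeartbeats 2000000 in
open Classical in
lemma main_card {p N : ℕ} (lam : Nat.Partition (2 * p)) (hN : 2 * p ≤ N) :
    Nat.card {T : SYD lam p p //
        (∀ i, Odd i → 2 * T.f i = Multiset.count i lam.parts) ∧
          ∀ i, Even i → Even (Multiset.count i lam.parts) ∧ Even (T.f i)}
      = (((Finset.Icc 1 N ×ˢ (Finset.univ : Finset (Fin 3))).finsuppAntidiag
            (degOf lam p p)).filter
          (fun l : (ℕ × Fin 3) →₀ (Var →₀ ℕ) =>
            ∀ x ∈ Finset.Icc 1 N ×ˢ (Finset.univ : Finset (Fin 3)),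
            ∃ c : ℕ, l x = c • E x)).card := by
  classical
  rw [← Nat.card_eq_finsetCard]
  apply Nat.card_congr
  refine Equiv.ofBijective (fun T =>
    ⟨lOf N (fun i => Multiset.count i lam.parts) T.1.f, Finset.mem_filter.2
      ⟨Finset.mem_finsuppAntidiag.2
        ⟨sum_lOf lam hN T.1.f T.1.le_mult T.2.1 T.2.2, Finsupp.support_onFinset_subset⟩,
        fun x hx => ⟨cOf (fun i => Multiset.count i lam.parts) T.1.f x, lOf_apply_mem hx⟩⟩⟩)
    ⟨?_, ?_⟩
  · -- injectivity
    intro T T' h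
    simp only [Subtype.mk.injEq] at h
    have hf : T.1.f = T'.1.f := by
      funext i
      rcases Nat.even_or_odd i with hie | hio
      · by_cases hcase : 1 ≤ i / 2 ∧ i / 2 ≤ N
        · obtain ⟨h1, h2⟩ := hcase
          have h3 : i = 2 * (i / 2) := by obtain ⟨a, ha⟩ := hie; omega
          set k := i / 2 with hkdef
          have hk : ((k, 0) : ℕ × Fin 3) ∈ Finset.Icc 1 N ×ˢ (Finset.univ : Finset (Fin 3)) :=
            Finset.mem_product.2 ⟨Finset.mem_Icc.2 ⟨h1, h2⟩, Finset.mem_univ _⟩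
          have hv := congrArg (fun l : (ℕ × Fin 3) →₀ (Var →₀ ℕ) =>
            (l (k, (0 : Fin 3))) (Sum.inl (2 * k))) h
          rw [lOf_apply_mem hk, lOf_apply_mem hk, cOf_0, cOf_0, E_fst, Finsupp.smul_apply,
            Finsupp.smul_apply, ee_apply_inl, if_pos rfl, smul_eq_mul, smul_eq_mul] at hv
          obtain ⟨a, ha⟩ := (T.2.2 (2 * k) ⟨k, by ring⟩).2
          obtain ⟨b, hb⟩ := (T'.2.2 (2 * k) ⟨k, by ring⟩).2
          rw [h3]
          omega
        · have hi0 : Multiset.count i lam.parts = 0 := by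
            apply count_zero_out lam
            obtain ⟨a, ha⟩ := hie
            omega
          have e1 := T.1.le_mult i
          have e2 := T'.1.le_mult i
          omega
      · have h1 := T.2.1 i hio
        have h2 := T'.2.1 i hio
        omega
    apply Subtype.ext
    obtain ⟨⟨f, hle, hplus, hminus⟩, hT⟩ := T
    obtain ⟨⟨f', hle', hplus', hminus'⟩, hT'⟩ := T'
    simp only at hf
    subst hf
    rfl
  · -- surjectivity
    rintro ⟨l, hl⟩
    rw [Finset.mem_filter] at hl
    obtain ⟨hl1, hQ⟩ := hl
    rw [Finset.mem_finsuppAntidiag] at hl1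
    obtain ⟨hsum, hsupp⟩ := hl1
    have hQ' : ∀ x : ℕ × Fin 3, ∃ c : ℕ,
        x ∈ Finset.Icc 1 N ×ˢ (Finset.univ : Finset (Fin 3)) → l x = c • E x := by
      intro x
      by_cases hx : x ∈ Finset.Icc 1 N ×ˢ (Finset.univ : Finset (Fin 3))
      · obtain ⟨c, hc⟩ := hQ x hx; exact ⟨c, fun _ => hc⟩
      · exact ⟨0, fun h => absurd h hx⟩
    choose n hn using hQ'
    have hn' : ∀ x ∈ Finset.Icc 1 N ×ˢ (Finset.univ : Finset (Fin 3)), l x = n x • E x :=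
      fun x hx => hn x hx
    have hA : ∀ k ∈ Finset.Icc 1 N,
        2 * n (k, 0) + 2 * n (k, 1) = Multiset.count (2 * k) lam.parts :=
      fun k hk => (coord_eqs lam l n hn' hsum hk).1
    have hB : ∀ k ∈ Finset.Icc 1 N,
        2 * n (k, 2) = Multiset.count (2 * k - 1) lam.parts :=
      fun k hk => (coord_eqs lam l n hn' hsum hk).2
    set F : ℕ → ℕ := FOf N (fun i => Multiset.count i lam.parts) l with hFdef
    have hFval : ∀ k ∈ Finset.Icc 1 N, F (2 * k) = 2 * n (k, 0) := by
      intro k hk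
      have hdd : (2 * k) / 2 = k := by omega
      rw [hFdef]
      simp only [FOf]
      rw [if_pos ⟨k, rfl⟩, hdd, if_pos hk,
        hn' (k, 0) (Finset.mem_product.2 ⟨hk, Finset.mem_univ _⟩), Finsupp.smul_apply, E_fst,
        ee_apply_inl, if_pos rfl, smul_eq_mul]
      ring
    have hFodd : ∀ i, ¬ 2 ∣ i → F i = Multiset.count i lam.parts / 2 := by
      intro i hi
      rw [hFdef]
      simp only [FOf]
      rw [if_neg hi]
    have hFout : ∀ i, 2 ∣ i → i / 2 ∉ Finset.Icc 1 N → F i = 0 := by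
      intro i hi hi2
      rw [hFdef]
      simp only [FOf]
      rw [if_pos hi, if_neg hi2]
    have hzero : ∀ i, i = 0 ∨ N < i → Multiset.count i lam.parts = 0 := by
      intro i hi
      exact count_zero_out lam (by omega)
    -- the parity facts
    have hodd' : ∀ i, Odd i → 2 * F i = Multiset.count i lam.parts := by
      intro i hio
      have hnd : ¬ 2 ∣ i := by obtain ⟨a, ha⟩ := hio; omega
      rw [hFodd i hnd]
      have heven : 2 ∣ Multiset.count i lam.parts := by
        by_cases hiN : i ≤ 2 * N
        · have hk : (i + 1) / 2 ∈ Finset.Icc 1 N := by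
            rw [Finset.mem_Icc]; obtain ⟨a, ha⟩ := hio; omega
          have := hB ((i + 1) / 2) hk
          have hi' : 2 * ((i + 1) / 2) - 1 = i := by obtain ⟨a, ha⟩ := hio; omega
          rw [hi'] at this
          exact ⟨n ((i + 1) / 2, 2), this.symm⟩
        · rw [hzero i (Or.inr (by omega))]
          exact dvd_zero 2
      exact Nat.mul_div_cancel' heven
    have heven' : ∀ i, Even i →
        Even (Multiset.count i lam.parts) ∧ Even (F i) := by
      intro i hie
      have hd : 2 ∣ i := by obtain ⟨a, ha⟩ := hie; omega
      by_cases hk : i / 2 ∈ Finset.Icc 1 N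
      · have h3 : i = 2 * (i / 2) := by omega
        have ha := hA (i / 2) hk
        have hf := hFval (i / 2) hk
        rw [← h3] at ha hf
        exact ⟨⟨n (i / 2, 0) + n (i / 2, 1), by omega⟩, ⟨n (i / 2, 0), by omega⟩⟩
      · have hc0 : Multiset.count i lam.parts = 0 := by
          apply hzero
          rw [Finset.mem_Icc] at hk
          omega
        rw [hc0, hFout i hd hk]
        exact ⟨Even.zero, Even.zero⟩
    have hle : ∀ i, F i ≤ Multiset.count i lam.parts := by
      intro i
      by_cases hd : 2 ∣ i
      · by_cases hk : i / 2 ∈ Finset.Icc 1 N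
        · have h3 : i = 2 * (i / 2) := by omega
          have ha := hA (i / 2) hk
          have hf := hFval (i / 2) hk
          rw [← h3] at ha hf
          omega
        · rw [hFout i hd hk]
          exact Nat.zero_le _
      · rw [hFodd i hd]
        exact Nat.div_le_self _ _
    obtain ⟨hplus, hminus⟩ := plus_minus_eq lam F hle hodd'
    refine ⟨⟨⟨F, hle, hplus, hminus⟩, hodd', heven'⟩, ?_⟩
    apply Subtype.ext
    simp only
    apply Finsupp.ext
    intro x
    by_cases hx : x ∈ Finset.Icc 1 N ×ˢ (Finset.univ : Finset (Fin 3))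
    · rw [lOf_apply_mem hx, hn' x hx]
      obtain ⟨k, j⟩ := x
      have hk : k ∈ Finset.Icc 1 N := (Finset.mem_product.1 hx).1
      congr 1
      fin_cases j <;>
        simp only [Fin.zero_eta, Fin.mk_one, Fin.reduceFinMk, cOf_0, cOf_1, cOf_2]
      · have hf := hFval k hk
        omega
      · have ha := hA k hk
        have hf := hFval k hk
        omega
      · have hb := hB k hk
        omega
    · rw [lOf_apply_not_mem hx]
      exact (Finsupp.notMem_support_iff.1 (fun h => hx (hsupp h))).symm

/-- Generating function for the number of signed Young diagrams of type DIII: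
`syd_DIII(λ;p,p)` consists of the `T ∈ syd(λ;p,p)` with `m_T⁺(i) = m(i)/2` for
every odd part length `i`, and `m(i)` and `m_T⁺(i)` even for every even part
length `i`. -/
theorem stmt4 (p : ℕ) (lam : Nat.Partition (2 * p)) (N : ℕ) (hN : 2 * p ≤ N) :
    (Nat.card {T : SYD lam p p //
        (∀ i, Odd i → 2 * T.f i = Multiset.count i lam.parts) ∧
          ∀ i, Even i → Even (Multiset.count i lam.parts) ∧ Even (T.f i)} : ℤ) =
      MvPowerSeries.coeff (R := ℤ) (degOf lam p p)
        (∏ k ∈ Finset.Icc 1 N,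
          (geomInv (va ^ (2 * k) * vb ^ (2 * k) * vt (2 * k) ^ 2)) ^ 2 *
            geomInv (va ^ (2 * k - 1) * vb ^ (2 * k - 1) * vt (2 * k - 1) ^ 2)) := by
  rw [prod_eq N, coeff_rhs (degOf lam p p) N, main_card lam hN]
end
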